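/- Let A be an m×m Kirchhoff matrix such that Y·A = M, and suppose the associated directed graph of A is weakly reversible. If A' is the dense realization (a Kirchhoff matrix with Y·A' = M whose support contains the support of every Kirchhoff matrix B with Y·B = M), then every edge of the graph of A lies within a single strongly connected component of the graph of A'. -/

import Mathlib

/-- An `m × m` real matrix is a Kirchhoff matrix: nonnegative off-diagonal
entries, nonpositive diagonal entries, and zero column sums. -/
def IsKirchhoff {m : ℕ} (A : Matrix (Fin m) (Fin m) ℝ) : Prop :=
  (∀ i j, i ≠ j → 0 ≤ A i j) ∧ (∀ i, A i i ≤ 0) ∧ (∀ j, ∑ i, A i j = 0)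

/-- Every edge of a weakly reversible realization lies within a single strongly
connected component of the dense realization. -/
theorem weaklyReversible_edges_in_dense_scc {n m : ℕ}
    (Y : Matrix (Fin n) (Fin m) ℝ) (M : Matrix (Fin n) (Fin m) ℝ)
    (A A' : Matrix (Fin m) (Fin m) ℝ)
    (hA : IsKirchhoff A) (hAM : Y * A = M)
    (hWR : ∀ u v, Relation.ReflTransGen (fun j i => j ≠ i ∧ 0 < A i j) u v →
      Relation.ReflTransGen (fun j i => j ≠ i ∧ 0 < A i j) v u)
    (hA' : IsKirchhoff A') (hA'M : Y * A' = M)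
    (hdense : ∀ B : Matrix (Fin m) (Fin m) ℝ, IsKirchhoff B → Y * B = M →
      ∀ i j, i ≠ j → 0 < B i j → 0 < A' i j) :
    ∀ j i, (j ≠ i ∧ 0 < A i j) →
      Relation.ReflTransGen (fun p q => p ≠ q ∧ 0 < A' q p) j i ∧
        Relation.ReflTransGen (fun p q => p ≠ q ∧ 0 < A' q p) i j := by
  intro j i hji
  have hmono : ∀ u v, Relation.ReflTransGen (fun j i => j ≠ i ∧ 0 < A i j) u v →
      Relation.ReflTransGen (fun p q => p ≠ q ∧ 0 < A' q p) u v := by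
    intro u v h
    exact Relation.ReflTransGen.mono (p := fun p q => p ≠ q ∧ 0 < A' q p)
      (fun p q hpq => ⟨hpq.1, hdense A hA hAM q p (Ne.symm hpq.1) hpq.2⟩) u v h
  have hstep : Relation.ReflTransGen (fun j i => j ≠ i ∧ 0 < A i j) j i :=
    Relation.ReflTransGen.single hji
  exact ⟨hmono j i hstep, hmono i j (hWR j i hstep)⟩
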